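/- arXiv:1410.4628 — 10 statements merged into one kernel-verified Lean document; each statement's English description precedes it below -/
import Mathlib

section
/- The map R_{α,β}(x₁,x₂,y₁,y₂) = (y₁ + (α−β)/(x₁−y₂), y₂, x₁, x₂ + (α−β)/(x₁−y₂)), defined on tuples of complex numbers with x₁ ≠ y₂ and the analogous non-degeneracy at each step, satisfies the parametric Yang–Baxter equation R²³_{β,γ} ∘ R¹³_{α,γ} ∘ R¹²_{α,β} = R¹²_{α,β} ∘ R¹³_{α,γ} ∘ R²³_{β,γ}, where R^{ij} denotes the action of R on the i-th and j-th pair of coordinates of ((x₁,x₂),(y₁,y₂),(z₁,z₂)). -/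
/-- The KdV (H₁) lift Yang–Baxter map `R_{α,β}` on `ℂ² × ℂ²`. -/
noncomputable def RH1 (α β : ℂ) (x y : ℂ × ℂ) : (ℂ × ℂ) × (ℂ × ℂ) :=
  ((y.1 + (α - β) / (x.1 - y.2), y.2), (x.1, x.2 + (α - β) / (x.1 - y.2)))

/-- Action of `R` on factors 1 and 2 of `(ℂ²)³`. -/
noncomputable def R12 (α β : ℂ) (p : (ℂ × ℂ) × (ℂ × ℂ) × (ℂ × ℂ)) :
    (ℂ × ℂ) × (ℂ × ℂ) × (ℂ × ℂ) :=
  ((RH1 α β p.1 p.2.1).1, (RH1 α β p.1 p.2.1).2, p.2.2)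

/-- Action of `R` on factors 1 and 3 of `(ℂ²)³`. -/
noncomputable def R13 (α β : ℂ) (p : (ℂ × ℂ) × (ℂ × ℂ) × (ℂ × ℂ)) :
    (ℂ × ℂ) × (ℂ × ℂ) × (ℂ × ℂ) :=
  ((RH1 α β p.1 p.2.2).1, p.2.1, (RH1 α β p.1 p.2.2).2)

/-- Action of `R` on factors 2 and 3 of `(ℂ²)³`. -/
noncomputable def R23 (α β : ℂ) (p : (ℂ × ℂ) × (ℂ × ℂ) × (ℂ × ℂ)) :
    (ℂ × ℂ) × (ℂ × ℂ) × (ℂ × ℂ) :=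
  (p.1, (RH1 α β p.2.1 p.2.2).1, (RH1 α β p.2.1 p.2.2).2)

set_option maxHeartbeats 4000000 in
/-- The KdV lift satisfies the parametric Yang–Baxter equation
`R²³_{β,γ} ∘ R¹³_{α,γ} ∘ R¹²_{α,β} = R¹²_{α,β} ∘ R¹³_{α,γ} ∘ R²³_{β,γ}`,
under the non-degeneracy conditions at each step. -/
theorem yang_baxter_KdV_lift (α β γ : ℂ) (p : (ℂ × ℂ) × (ℂ × ℂ) × (ℂ × ℂ))
    (h1 : p.1.1 ≠ p.2.1.2)
    (h2 : (R12 α β p).1.1 ≠ (R12 α β p).2.2.2)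
    (h3 : (R13 α γ (R12 α β p)).2.1.1 ≠ (R13 α γ (R12 α β p)).2.2.2)
    (h4 : p.2.1.1 ≠ p.2.2.2)
    (h5 : (R23 β γ p).1.1 ≠ (R23 β γ p).2.2.2)
    (h6 : (R13 α γ (R23 β γ p)).1.1 ≠ (R13 α γ (R23 β γ p)).2.1.2) :
    R23 β γ (R13 α γ (R12 α β p)) = R12 α β (R13 α γ (R23 β γ p)) := by
  obtain ⟨⟨x1, x2⟩, ⟨y1, y2⟩, z1, z2⟩ := p
  simp only [RH1, R12, R13, R23] at *
  have d1 : x1 - y2 ≠ 0 := sub_ne_zero.mpr h1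
  have d2 : y1 + (α - β) / (x1 - y2) - z2 ≠ 0 := sub_ne_zero.mpr h2
  have d3 : x1 - (y2 + (α - γ) / (y1 + (α - β) / (x1 - y2) - z2)) ≠ 0 := sub_ne_zero.mpr h3
  have d4 : y1 - z2 ≠ 0 := sub_ne_zero.mpr h4
  have d5 : x1 - (y2 + (β - γ) / (y1 - z2)) ≠ 0 := sub_ne_zero.mpr h5
  have d6 : y1 + (α - γ) / (x1 - (y2 + (β - γ) / (y1 - z2))) - z2 ≠ 0 := sub_ne_zero.mpr h6
  have e2 : (x1 - y2) * (y1 - z2) + (α - β) ≠ 0 := by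
    have := mul_ne_zero d2 d1
    field_simp at this
    intro h; apply this; linear_combination h
  have e3 : (x1 - y2) * (y1 - z2) + (γ - β) ≠ 0 := by
    have := mul_ne_zero d5 d4
    field_simp at this
    intro h; apply this; linear_combination h
  have k2 : y1 + (α - β) / (x1 - y2) - z2 = ((x1 - y2) * (y1 - z2) + (α - β)) / (x1 - y2) := by
    field_simp; ring
  have k5 : x1 - (y2 + (β - γ) / (y1 - z2)) = ((x1 - y2) * (y1 - z2) + (γ - β)) / (y1 - z2) := by
    field_simp; ring
  rw [k2, k5]
  have k3 : x1 - (y2 + (α - γ) / (((x1 - y2) * (y1 - z2) + (α - β)) / (x1 - y2))) =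
      (x1 - y2) * ((x1 - y2) * (y1 - z2) + (γ - β)) / ((x1 - y2) * (y1 - z2) + (α - β)) := by
    field_simp; ring
  have k6 : y1 + (α - γ) / (((x1 - y2) * (y1 - z2) + (γ - β)) / (y1 - z2)) - z2 =
      (y1 - z2) * ((x1 - y2) * (y1 - z2) + (α - β)) / ((x1 - y2) * (y1 - z2) + (γ - β)) := by
    field_simp; ring
  rw [k3, k6]
  refine Prod.ext ?_ (Prod.ext ?_ ?_) <;> refine Prod.ext ?_ ?_ <;> simp <;>
    field_simp <;> ring
end

section
/- The map R_{α,β}(x₁,x₂,y₁,y₂) = (y₁ + (α−β)/(x₁−y₂), y₂, x₁, x₂ + (α−β)/(x₁−y₂)) is a Poisson map with respect to the bracket defined by {x₁,x₂} = 1, {y₁,y₂} = 1, and {xᵢ,yⱼ} = 0 for i,j ∈ {1,2}; equivalently, writing (u₁,u₂,v₁,v₂) for the image, the Jacobian relations give {u₁,u₂} = 1, {v₁,v₂} = 1 and {uᵢ,vⱼ} = 0, where the bracket of functions f,g on ℂ⁴ is {f,g} = (∂f/∂x₁)(∂g/∂x₂) − (∂f/∂x₂)(∂g/∂x₁) + (∂f/∂y₁)(∂g/∂y₂)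 − (∂f/∂y₂)(∂g/∂y₁). -/
/-- Partial derivative in the first coordinate. -/
noncomputable def d1 (f : ℂ → ℂ → ℂ → ℂ → ℂ) (a b c d : ℂ) : ℂ :=
  deriv (fun t => f t b c d) a

/-- Partial derivative in the second coordinate. -/
noncomputable def d2 (f : ℂ → ℂ → ℂ → ℂ → ℂ) (a b c d : ℂ) : ℂ :=
  deriv (fun t => f a t c d) b

/-- Partial derivative in the third coordinate. -/
noncomputable def d3 (f : ℂ → ℂ → ℂ → ℂ → ℂ) (a b c d : ℂ) : ℂ :=
  deriv (fun t => f a b t d) c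

/-- Partial derivative in the fourth coordinate. -/
noncomputable def d4 (f : ℂ → ℂ → ℂ → ℂ → ℂ) (a b c d : ℂ) : ℂ :=
  deriv (fun t => f a b c t) d

/-- Canonical Poisson bracket on ℂ⁴ with coordinates (x₁,x₂,y₁,y₂):
`{x₁,x₂} = 1`, `{y₁,y₂} = 1`, `{xᵢ,yⱼ} = 0`. -/
noncomputable def pb (f g : ℂ → ℂ → ℂ → ℂ → ℂ) (a b c d : ℂ) : ℂ :=
  (d1 f a b c d * d2 g a b c d - d2 f a b c d * d1 g a b c d) +
  (d3 f a b c d * d4 g a b c d - d4 f a b c d * d3 g a b c d)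

/-- The KdV lift is a Poisson map with respect to the canonical bracket:
the image components satisfy `{u₁,u₂} = 1`, `{v₁,v₂} = 1`, `{uᵢ,vⱼ} = 0`. -/
theorem KdV_lift_Poisson (α β : ℂ)
    (u₁ : ℂ → ℂ → ℂ → ℂ → ℂ) (u₂ : ℂ → ℂ → ℂ → ℂ → ℂ)
    (v₁ : ℂ → ℂ → ℂ → ℂ → ℂ) (v₂ : ℂ → ℂ → ℂ → ℂ → ℂ)
    (hu₁ : u₁ = fun x₁ _ y₁ y₂ => y₁ + (α - β) / (x₁ - y₂))
    (hu₂ : u₂ = fun _ _ _ y₂ => y₂)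
    (hv₁ : v₁ = fun x₁ _ _ _ => x₁)
    (hv₂ : v₂ = fun x₁ x₂ _ y₂ => x₂ + (α - β) / (x₁ - y₂))
    (x₁ x₂ y₁ y₂ : ℂ) (h : x₁ ≠ y₂) :
    pb u₁ u₂ x₁ x₂ y₁ y₂ = 1 ∧ pb v₁ v₂ x₁ x₂ y₁ y₂ = 1 ∧
    pb u₁ v₁ x₁ x₂ y₁ y₂ = 0 ∧ pb u₁ v₂ x₁ x₂ y₁ y₂ = 0 ∧
    pb u₂ v₁ x₁ x₂ y₁ y₂ = 0 ∧ pb u₂ v₂ x₁ x₂ y₁ y₂ = 0 := by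
  subst hu₁ hu₂ hv₁ hv₂
  have hs : x₁ - y₂ ≠ 0 := sub_ne_zero.mpr h
  set c := α - β with hc
  -- derivative in x₁ of c/(x₁ - y₂)
  have H1 : ∀ k : ℂ, deriv (fun t => k + c / (t - y₂)) x₁ =
      (0 * (x₁ - y₂) - c * 1) / (x₁ - y₂) ^ 2 := by
    intro k
    have := (((hasDerivAt_const x₁ c).div ((hasDerivAt_id x₁).sub_const y₂)
      hs)).const_add k
    simpa using this.deriv
  -- derivative in y₂ of c/(x₁ - y₂)
  have hs' : x₁ - y₂ ≠ 0 := hs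
  have H4 : ∀ k : ℂ, deriv (fun t => k + c / (x₁ - t)) y₂ =
      (0 * (x₁ - y₂) - c * (0 - 1)) / (x₁ - y₂) ^ 2 := by
    intro k
    have := (((hasDerivAt_const y₂ c).div ((hasDerivAt_const y₂ x₁).sub
      (hasDerivAt_id y₂)) hs')).const_add k
    simpa using this.deriv
  have Hd1u₁ : d1 (fun x₁ _ y₁ y₂ => y₁ + c / (x₁ - y₂)) x₁ x₂ y₁ y₂ =
      (0 * (x₁ - y₂) - c * 1) / (x₁ - y₂) ^ 2 := H1 y₁
  have Hd4u₁ : d4 (fun x₁ _ y₁ y₂ => y₁ + c / (x₁ - y₂)) x₁ x₂ y₁ y₂ =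
      (0 * (x₁ - y₂) - c * (0 - 1)) / (x₁ - y₂) ^ 2 := H4 y₁
  have Hd1v₂ : d1 (fun x₁ x₂ _ y₂ => x₂ + c / (x₁ - y₂)) x₁ x₂ y₁ y₂ =
      (0 * (x₁ - y₂) - c * 1) / (x₁ - y₂) ^ 2 := H1 x₂
  have Hd4v₂ : d4 (fun x₁ x₂ _ y₂ => x₂ + c / (x₁ - y₂)) x₁ x₂ y₁ y₂ =
      (0 * (x₁ - y₂) - c * (0 - 1)) / (x₁ - y₂) ^ 2 := H4 x₂
  have Hd2u₁ : d2 (fun x₁ _ y₁ y₂ => y₁ + c / (x₁ - y₂)) x₁ x₂ y₁ y₂ = 0 := by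
    simp [d2]
  have Hd3u₁ : d3 (fun x₁ _ y₁ y₂ => y₁ + c / (x₁ - y₂)) x₁ x₂ y₁ y₂ = 1 := by
    simp [d3]
  have Hd2v₂ : d2 (fun x₁ x₂ _ y₂ => x₂ + c / (x₁ - y₂)) x₁ x₂ y₁ y₂ = 1 := by
    simp [d2]
  have Hd3v₂ : d3 (fun x₁ x₂ _ y₂ => x₂ + c / (x₁ - y₂)) x₁ x₂ y₁ y₂ = 0 := by
    simp [d3]
  have H1' : deriv (fun t => c / (t - y₂)) x₁ = -c / (x₁ - y₂) ^ 2 := by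
    have := ((hasDerivAt_const x₁ c).div ((hasDerivAt_id x₁).sub_const y₂) hs).deriv
    simp only [id_eq] at this; exact this.trans (by ring)
  have H4' : deriv (fun t => c / (x₁ - t)) y₂ = c / (x₁ - y₂) ^ 2 := by
    have := ((hasDerivAt_const y₂ c).div ((hasDerivAt_const y₂ x₁).sub (hasDerivAt_id y₂)) hs).deriv
    simp only [Pi.sub_apply, id_eq] at this; exact this.trans (by ring)
  refine ⟨?_, ?_, ?_, ?_, ?_, ?_⟩
  · simp [pb, d1, d2, d3, d4, deriv_const_add', H1', H4']
  · simp [pb, d1, d2, d3, d4, deriv_const_add', H1', H4']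
  · simp [pb, d1, d2, d3, d4, deriv_const_add', H1', H4']
  · simp [pb, d1, d2, d3, d4, deriv_const_add', H1', H4']
    ring
  · simp [pb, d1, d2, d3, d4, deriv_const_add', H1', H4']
  · simp [pb, d1, d2, d3, d4, deriv_const_add', H1', H4']
end

section
/- The quad-graph equation Q(w,w₁,w₂,w₁₂;α,β) := (w₁₂ − w)(w₁ − w₂) − (α − β) = 0 is 3-dimensionally consistent: given initial values w, w₁, w₂, w₃ and parameters α, β, γ assigned to the three lattice directions, defining w₁₂, w₁₃, w₂₃ by the equation on the three faces adjacent to w, the three values of w₁₂₃ computed from the equations on the three faces adjacent to w₁₂₃ all coincide (whenever all expressions are well-defined). -/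
set_option maxHeartbeats 1000000 in
/-- 3D consistency of the H₁ (KdV) equation `(w₁₂ − w)(w₁ − w₂) = α − β`,
equivalently `w₁₂ = w + (α−β)/(w₁−w₂)`.  The three ways of computing `w₁₂₃`
coincide whenever all expressions are well-defined. -/
theorem H1_threeD_consistent (α β γ w w₁ w₂ w₃ w₁₂ w₁₃ w₂₃ : ℂ)
    (h12 : w₁ - w₂ ≠ 0) (h13 : w₁ - w₃ ≠ 0) (h23 : w₂ - w₃ ≠ 0)
    (hw12 : w₁₂ = w + (α - β) / (w₁ - w₂))
    (hw13 : w₁₃ = w + (α - γ) / (w₁ - w₃))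
    (hw23 : w₂₃ = w + (β - γ) / (w₂ - w₃))
    (h1 : w₁₃ - w₂₃ ≠ 0) (h2 : w₁₂ - w₂₃ ≠ 0) (h3 : w₁₂ - w₁₃ ≠ 0) :
    w₃ + (α - β) / (w₁₃ - w₂₃) = w₂ + (α - γ) / (w₁₂ - w₂₃) ∧
    w₂ + (α - γ) / (w₁₂ - w₂₃) = w₁ + (β - γ) / (w₁₂ - w₁₃) := by
  set D : ℂ := (α - γ) * (w₂ - w₃) - (β - γ) * (w₁ - w₃) with hD
  have e1 : w₁₃ - w₂₃ = D / ((w₁ - w₃) * (w₂ - w₃)) := by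
    rw [hw13, hw23, hD]; field_simp; ring
  have e2 : w₁₂ - w₂₃ = D / ((w₁ - w₂) * (w₂ - w₃)) := by
    rw [hw12, hw23, hD]; field_simp; ring
  have e3 : w₁₂ - w₁₃ = D / ((w₁ - w₂) * (w₁ - w₃)) := by
    rw [hw12, hw13, hD]; field_simp; ring
  have hDne : D ≠ 0 := by
    intro h0
    apply h1
    rw [e1, h0, zero_div]
  rw [e1, e2, e3, div_div_eq_mul_div, div_div_eq_mul_div, div_div_eq_mul_div]
  constructor <;> field_simp <;> ring
end

section
/- The multiparametric cross-ratio equation α(β₁w − β₂w₂)(β₁w₁ − β₂w₁₂) − β(α₁w − α₂w₁)(α₁w₂ − α₂w₁₂) = 0, with vector parameters ᾱ = (α,α₁,α₂) and β̄ = (β,β₁,β₂), is 3-dimensionally consistent: solving for w₁₂, w₁₃, w₂₃ on the three faces of a cube adjacent to w (with parameter triples ᾱ, β̄, γ̄ = (γ,γ₁,γ₂) attached to the three directions), the three resulting values for w₁₂₃ coincide generically. -/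
/-- The multiparametric cross-ratio polynomial. -/
def Qcr (w w₁ w₂ w₁₂ α α₁ α₂ β β₁ β₂ : ℂ) : ℂ :=
  α * (β₁ * w - β₂ * w₂) * (β₁ * w₁ - β₂ * w₁₂) -
  β * (α₁ * w - α₂ * w₁) * (α₁ * w₂ - α₂ * w₁₂)

/-- Denominator of the solution of a cross-ratio face equation for the fourth vertex. -/
def dcr {R : Type*} [CommRing R] (w w₁ w₂ α α₁ α₂ β β₁ β₂ : R) : R :=
  α*β₂*(β₁*w-β₂*w₂) - β*α₂*(α₁*w-α₂*w₁)

/-- Numerator of the solution of a cross-ratio face equation for the fourth vertex. -/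
def ncr {R : Type*} [CommRing R] (w w₁ w₂ α α₁ α₂ β β₁ β₂ : R) : R :=
  α*β₁*w₁*(β₁*w-β₂*w₂) - β*α₁*w₂*(α₁*w-α₂*w₁)

/-- Lifted denominator of a top face: the denominator for the fourth vertex of a face
with base vertex `W` and adjacent vertices `np/dp`, `nq/dq`, cleared of fractions. -/
def dtop {R : Type*} [CommRing R] (W np dp nq dq A A₁ A₂ B B₁ B₂ : R) : R :=
  A*B₂*(B₁*W*dp*dq - B₂*nq*dp) - B*A₂*(A₁*W*dp*dq - A₂*np*dq)

/-- Lifted numerator of a top face. -/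
def ntop {R : Type*} [CommRing R] (W np dp nq dq A A₁ A₂ B B₁ B₂ : R) : R :=
  A*B₁*np*(B₁*W*dq - B₂*nq) - B*A₁*nq*(A₁*W*dp - A₂*np)

open MvPolynomial in
/-- The genericity polynomial: the product of the six denominators. -/
noncomputable def Pcr : MvPolynomial (Fin 13) ℂ :=
  dcr (X 0) (X 1) (X 2) (X 4) (X 5) (X 6) (X 7) (X 8) (X 9) *
  dcr (X 0) (X 1) (X 3) (X 4) (X 5) (X 6) (X 10) (X 11) (X 12) *
  dcr (X 0) (X 2) (X 3) (X 7) (X 8) (X 9) (X 10) (X 11) (X 12) *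
  dtop (X 3) (ncr (X 0) (X 1) (X 3) (X 4) (X 5) (X 6) (X 10) (X 11) (X 12))
    (dcr (X 0) (X 1) (X 3) (X 4) (X 5) (X 6) (X 10) (X 11) (X 12))
    (ncr (X 0) (X 2) (X 3) (X 7) (X 8) (X 9) (X 10) (X 11) (X 12))
    (dcr (X 0) (X 2) (X 3) (X 7) (X 8) (X 9) (X 10) (X 11) (X 12))
    (X 4) (X 5) (X 6) (X 7) (X 8) (X 9) *
  dtop (X 2) (ncr (X 0) (X 1) (X 2) (X 4) (X 5) (X 6) (X 7) (X 8) (X 9))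
    (dcr (X 0) (X 1) (X 2) (X 4) (X 5) (X 6) (X 7) (X 8) (X 9))
    (ncr (X 0) (X 2) (X 3) (X 7) (X 8) (X 9) (X 10) (X 11) (X 12))
    (dcr (X 0) (X 2) (X 3) (X 7) (X 8) (X 9) (X 10) (X 11) (X 12))
    (X 4) (X 5) (X 6) (X 10) (X 11) (X 12) *
  dtop (X 1) (ncr (X 0) (X 1) (X 2) (X 4) (X 5) (X 6) (X 7) (X 8) (X 9))
    (dcr (X 0) (X 1) (X 2) (X 4) (X 5) (X 6) (X 7) (X 8) (X 9))
    (ncr (X 0) (X 1) (X 3) (X 4) (X 5) (X 6) (X 10) (X 11) (X 12))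
    (dcr (X 0) (X 1) (X 3) (X 4) (X 5) (X 6) (X 10) (X 11) (X 12))
    (X 7) (X 8) (X 9) (X 10) (X 11) (X 12)

lemma eval_Pcr (v : Fin 13 → ℂ) :
    MvPolynomial.eval v Pcr =
      dcr (v 0) (v 1) (v 2) (v 4) (v 5) (v 6) (v 7) (v 8) (v 9) *
      dcr (v 0) (v 1) (v 3) (v 4) (v 5) (v 6) (v 10) (v 11) (v 12) *
      dcr (v 0) (v 2) (v 3) (v 7) (v 8) (v 9) (v 10) (v 11) (v 12) *
      dtop (v 3) (ncr (v 0) (v 1) (v 3) (v 4) (v 5) (v 6) (v 10) (v 11) (v 12))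
        (dcr (v 0) (v 1) (v 3) (v 4) (v 5) (v 6) (v 10) (v 11) (v 12))
        (ncr (v 0) (v 2) (v 3) (v 7) (v 8) (v 9) (v 10) (v 11) (v 12))
        (dcr (v 0) (v 2) (v 3) (v 7) (v 8) (v 9) (v 10) (v 11) (v 12))
        (v 4) (v 5) (v 6) (v 7) (v 8) (v 9) *
      dtop (v 2) (ncr (v 0) (v 1) (v 2) (v 4) (v 5) (v 6) (v 7) (v 8) (v 9))
        (dcr (v 0) (v 1) (v 2) (v 4) (v 5) (v 6) (v 7) (v 8) (v 9))
        (ncr (v 0) (v 2) (v 3) (v 7) (v 8) (v 9) (v 10) (v 11) (v 12))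
        (dcr (v 0) (v 2) (v 3) (v 7) (v 8) (v 9) (v 10) (v 11) (v 12))
        (v 4) (v 5) (v 6) (v 10) (v 11) (v 12) *
      dtop (v 1) (ncr (v 0) (v 1) (v 2) (v 4) (v 5) (v 6) (v 7) (v 8) (v 9))
        (dcr (v 0) (v 1) (v 2) (v 4) (v 5) (v 6) (v 7) (v 8) (v 9))
        (ncr (v 0) (v 1) (v 3) (v 4) (v 5) (v 6) (v 10) (v 11) (v 12))
        (dcr (v 0) (v 1) (v 3) (v 4) (v 5) (v 6) (v 10) (v 11) (v 12))
        (v 7) (v 8) (v 9) (v 10) (v 11) (v 12) := by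
  simp only [Pcr, dcr, ncr, dtop, ntop, map_mul, map_sub, map_add, MvPolynomial.eval_X]

lemma Pcr_ne_zero : Pcr ≠ 0 := by
  intro h
  have h0 : MvPolynomial.eval
      (![1, 2, 1, 1, 3, 2, 3, 3, 3, 1, 2, 1, 3] : Fin 13 → ℂ) Pcr = 0 := by
    rw [h]; simp
  rw [eval_Pcr] at h0
  have e0 : (![1, 2, 1, 1, 3, 2, 3, 3, 3, 1, 2, 1, 3] : Fin 13 → ℂ) 0 = 1 := rfl
  have e1 : (![1, 2, 1, 1, 3, 2, 3, 3, 3, 1, 2, 1, 3] : Fin 13 → ℂ) 1 = 2 := rfl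
  have e2 : (![1, 2, 1, 1, 3, 2, 3, 3, 3, 1, 2, 1, 3] : Fin 13 → ℂ) 2 = 1 := rfl
  have e3 : (![1, 2, 1, 1, 3, 2, 3, 3, 3, 1, 2, 1, 3] : Fin 13 → ℂ) 3 = 1 := rfl
  have e4 : (![1, 2, 1, 1, 3, 2, 3, 3, 3, 1, 2, 1, 3] : Fin 13 → ℂ) 4 = 3 := rfl
  have e5 : (![1, 2, 1, 1, 3, 2, 3, 3, 3, 1, 2, 1, 3] : Fin 13 → ℂ) 5 = 2 := rfl
  have e6 : (![1, 2, 1, 1, 3, 2, 3, 3, 3, 1, 2, 1, 3] : Fin 13 → ℂ) 6 = 3 := rfl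
  have e7 : (![1, 2, 1, 1, 3, 2, 3, 3, 3, 1, 2, 1, 3] : Fin 13 → ℂ) 7 = 3 := rfl
  have e8 : (![1, 2, 1, 1, 3, 2, 3, 3, 3, 1, 2, 1, 3] : Fin 13 → ℂ) 8 = 3 := rfl
  have e9 : (![1, 2, 1, 1, 3, 2, 3, 3, 3, 1, 2, 1, 3] : Fin 13 → ℂ) 9 = 1 := rfl
  have e10 : (![1, 2, 1, 1, 3, 2, 3, 3, 3, 1, 2, 1, 3] : Fin 13 → ℂ) 10 = 2 := rfl
  have e11 : (![1, 2, 1, 1, 3, 2, 3, 3, 3, 1, 2, 1, 3] : Fin 13 → ℂ) 11 = 1 := rfl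
  have e12 : (![1, 2, 1, 1, 3, 2, 3, 3, 3, 1, 2, 1, 3] : Fin 13 → ℂ) 12 = 3 := rfl
  rw [e0, e1, e2, e3, e4, e5, e6, e7, e8, e9, e10, e11, e12] at h0
  norm_num [dcr, ncr, dtop, ntop] at h0

/-- Key identity I: `a = b` on the level of lifted numerators/denominators. -/
lemma key1 {R : Type*} [CommRing R] (w w₁ w₂ w₃ α α₁ α₂ β β₁ β₂ γ γ₁ γ₂ : R) :
    ntop w₃ (ncr w w₁ w₃ α α₁ α₂ γ γ₁ γ₂) (dcr w w₁ w₃ α α₁ α₂ γ γ₁ γ₂)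
      (ncr w w₂ w₃ β β₁ β₂ γ γ₁ γ₂) (dcr w w₂ w₃ β β₁ β₂ γ γ₁ γ₂) α α₁ α₂ β β₁ β₂ *
    dtop w₂ (ncr w w₁ w₂ α α₁ α₂ β β₁ β₂) (dcr w w₁ w₂ α α₁ α₂ β β₁ β₂)
      (ncr w w₂ w₃ β β₁ β₂ γ γ₁ γ₂) (dcr w w₂ w₃ β β₁ β₂ γ γ₁ γ₂) α α₁ α₂ γ γ₁ γ₂ =
    ntop w₂ (ncr w w₁ w₂ α α₁ α₂ β β₁ β₂) (dcr w w₁ w₂ α α₁ α₂ β β₁ β₂)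
      (ncr w w₂ w₃ β β₁ β₂ γ γ₁ γ₂) (dcr w w₂ w₃ β β₁ β₂ γ γ₁ γ₂) α α₁ α₂ γ γ₁ γ₂ *
    dtop w₃ (ncr w w₁ w₃ α α₁ α₂ γ γ₁ γ₂) (dcr w w₁ w₃ α α₁ α₂ γ γ₁ γ₂)
      (ncr w w₂ w₃ β β₁ β₂ γ γ₁ γ₂) (dcr w w₂ w₃ β β₁ β₂ γ γ₁ γ₂) α α₁ α₂ β β₁ β₂ := by
  simp only [ntop, dtop, ncr, dcr]; ring

/-- Key identity II: `b = c` on the level of lifted numerators/denominators. -/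
lemma key2 {R : Type*} [CommRing R] (w w₁ w₂ w₃ α α₁ α₂ β β₁ β₂ γ γ₁ γ₂ : R) :
    ntop w₂ (ncr w w₁ w₂ α α₁ α₂ β β₁ β₂) (dcr w w₁ w₂ α α₁ α₂ β β₁ β₂)
      (ncr w w₂ w₃ β β₁ β₂ γ γ₁ γ₂) (dcr w w₂ w₃ β β₁ β₂ γ γ₁ γ₂) α α₁ α₂ γ γ₁ γ₂ *
    dtop w₁ (ncr w w₁ w₂ α α₁ α₂ β β₁ β₂) (dcr w w₁ w₂ α α₁ α₂ β β₁ β₂)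
      (ncr w w₁ w₃ α α₁ α₂ γ γ₁ γ₂) (dcr w w₁ w₃ α α₁ α₂ γ γ₁ γ₂) β β₁ β₂ γ γ₁ γ₂ =
    ntop w₁ (ncr w w₁ w₂ α α₁ α₂ β β₁ β₂) (dcr w w₁ w₂ α α₁ α₂ β β₁ β₂)
      (ncr w w₁ w₃ α α₁ α₂ γ γ₁ γ₂) (dcr w w₁ w₃ α α₁ α₂ γ γ₁ γ₂) β β₁ β₂ γ γ₁ γ₂ *
    dtop w₂ (ncr w w₁ w₂ α α₁ α₂ β β₁ β₂) (dcr w w₁ w₂ α α₁ α₂ β β₁ β₂)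
      (ncr w w₂ w₃ β β₁ β₂ γ γ₁ γ₂) (dcr w w₂ w₃ β β₁ β₂ γ γ₁ γ₂) α α₁ α₂ γ γ₁ γ₂ := by
  simp only [ntop, dtop, ncr, dcr]; ring

/-- Solving a top face equation: if the two adjacent vertices are rational,
`W1 * dp = np`, `W2 * dq = nq`, and `Qcr W W1 W2 u A A₁ A₂ B B₁ B₂ = 0`, then
`u * dtop = ntop`. -/
lemma solve_top {W W1 W2 u A A₁ A₂ B B₁ B₂ np dp nq dq : ℂ}
    (h : Qcr W W1 W2 u A A₁ A₂ B B₁ B₂ = 0)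
    (hp : W1 * dp = np) (hq : W2 * dq = nq) :
    u * dtop W np dp nq dq A A₁ A₂ B B₁ B₂ = ntop W np dp nq dq A A₁ A₂ B B₁ B₂ := by
  simp only [Qcr] at h
  simp only [dtop, ntop]
  linear_combination (-(dp*dq)) * h +
    (-u*B*A₂^2*dq + A*B₁*dq*(B₁*W-B₂*W2) + B*A₁*A₂*nq) * hp +
    (u*A*B₂^2*dp - A*B₁*B₂*np - B*A₁*dp*(A₁*W-A₂*W1)) * hq

/-- 3D consistency of the multiparametric cross-ratio equation: generically
(outside the zero set of a nonzero polynomial `P` in the initial data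
`w,w₁,w₂,w₃` and the parameter triples `ᾱ,β̄,γ̄`), if `w₁₂,w₁₃,w₂₃` satisfy
the three bottom face equations and `a,b,c` are the values of `w₁₂₃` computed
from the three top face equations, then `a = b = c`. -/
theorem multiparametric_crossratio_threeD_consistent :
    ∃ P : MvPolynomial (Fin 13) ℂ, P ≠ 0 ∧
      ∀ w w₁ w₂ w₃ α α₁ α₂ β β₁ β₂ γ γ₁ γ₂ w₁₂ w₁₃ w₂₃ a b c : ℂ,
        MvPolynomial.eval
          (![w, w₁, w₂, w₃, α, α₁, α₂, β, β₁, β₂, γ, γ₁, γ₂] : Fin 13 → ℂ) P ≠ 0 →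
        Qcr w w₁ w₂ w₁₂ α α₁ α₂ β β₁ β₂ = 0 →
        Qcr w w₁ w₃ w₁₃ α α₁ α₂ γ γ₁ γ₂ = 0 →
        Qcr w w₂ w₃ w₂₃ β β₁ β₂ γ γ₁ γ₂ = 0 →
        Qcr w₃ w₁₃ w₂₃ a α α₁ α₂ β β₁ β₂ = 0 →
        Qcr w₂ w₁₂ w₂₃ b α α₁ α₂ γ γ₁ γ₂ = 0 →
        Qcr w₁ w₁₂ w₁₃ c β β₁ β₂ γ γ₁ γ₂ = 0 →
        a = b ∧ b = c := by
  refine ⟨Pcr, Pcr_ne_zero, ?_⟩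
  intro w w₁ w₂ w₃ α α₁ α₂ β β₁ β₂ γ γ₁ γ₂ w₁₂ w₁₃ w₂₃ a b c hP h1 h2 h3 h4 h5 h6
  set v : Fin 13 → ℂ := ![w, w₁, w₂, w₃, α, α₁, α₂, β, β₁, β₂, γ, γ₁, γ₂] with hv
  rw [eval_Pcr] at hP
  have e0 : v 0 = w := rfl
  have e1 : v 1 = w₁ := rfl
  have e2 : v 2 = w₂ := rfl
  have e3 : v 3 = w₃ := rfl
  have e4 : v 4 = α := rfl
  have e5 : v 5 = α₁ := rfl
  have e6 : v 6 = α₂ := rfl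
  have e7 : v 7 = β := rfl
  have e8 : v 8 = β₁ := rfl
  have e9 : v 9 = β₂ := rfl
  have e10 : v 10 = γ := rfl
  have e11 : v 11 = γ₁ := rfl
  have e12 : v 12 = γ₂ := rfl
  rw [e0, e1, e2, e3, e4, e5, e6, e7, e8, e9, e10, e11, e12] at hP
  -- names for numerators and denominators of the bottom faces
  set n12 := ncr w w₁ w₂ α α₁ α₂ β β₁ β₂ with hn12
  set d12 := dcr w w₁ w₂ α α₁ α₂ β β₁ β₂ with hd12
  set n13 := ncr w w₁ w₃ α α₁ α₂ γ γ₁ γ₂ with hn13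
  set d13 := dcr w w₁ w₃ α α₁ α₂ γ γ₁ γ₂ with hd13
  set n23 := ncr w w₂ w₃ β β₁ β₂ γ γ₁ γ₂ with hn23
  set d23 := dcr w w₂ w₃ β β₁ β₂ γ γ₁ γ₂ with hd23
  -- lifted top face numerators and denominators
  set nA := ntop w₃ n13 d13 n23 d23 α α₁ α₂ β β₁ β₂ with hnA
  set dA := dtop w₃ n13 d13 n23 d23 α α₁ α₂ β β₁ β₂ with hdA
  set nB := ntop w₂ n12 d12 n23 d23 α α₁ α₂ γ γ₁ γ₂ with hnB
  set dB := dtop w₂ n12 d12 n23 d23 α α₁ α₂ γ γ₁ γ₂ with hdB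
  set nC := ntop w₁ n12 d12 n13 d13 β β₁ β₂ γ γ₁ γ₂ with hnC
  set dC := dtop w₁ n12 d12 n13 d13 β β₁ β₂ γ γ₁ γ₂ with hdC
  have hdA0 : dA ≠ 0 := fun h => hP (by rw [h]; ring)
  have hdB0 : dB ≠ 0 := fun h => hP (by rw [h]; ring)
  have hdC0 : dC ≠ 0 := fun h => hP (by rw [h]; ring)
  -- solve the bottom faces
  have hw12 : w₁₂ * d12 = n12 := by
    rw [hd12, hn12]; simp only [Qcr] at h1; simp only [dcr, ncr]; linear_combination -h1
  have hw13 : w₁₃ * d13 = n13 := by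
    rw [hd13, hn13]; simp only [Qcr] at h2; simp only [dcr, ncr]; linear_combination -h2
  have hw23 : w₂₃ * d23 = n23 := by
    rw [hd23, hn23]; simp only [Qcr] at h3; simp only [dcr, ncr]; linear_combination -h3
  -- solve the top faces
  have ha : a * dA = nA := solve_top h4 hw13 hw23
  have hb : b * dB = nB := solve_top h5 hw12 hw23
  have hc : c * dC = nC := solve_top h6 hw12 hw13
  have kab : nA * dB = nB * dA := by
    rw [hnA, hdB, hnB, hdA, hn12, hd12, hn13, hd13, hn23, hd23]
    exact key1 w w₁ w₂ w₃ α α₁ α₂ β β₁ β₂ γ γ₁ γ₂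
  have kbc : nB * dC = nC * dB := by
    rw [hnB, hdC, hnC, hdB, hn12, hd12, hn13, hd13, hn23, hd23]
    exact key2 w w₁ w₂ w₃ α α₁ α₂ β β₁ β₂ γ γ₁ γ₂
  constructor
  · have : a * (dA * dB) = b * (dA * dB) := by
      calc a * (dA * dB) = (a * dA) * dB := by ring
        _ = nA * dB := by rw [ha]
        _ = nB * dA := kab
        _ = (b * dB) * dA := by rw [hb]
        _ = b * (dA * dB) := by ring
    exact mul_right_cancel₀ (mul_ne_zero hdA0 hdB0) this
  · have : b * (dB * dC) = c * (dB * dC) := by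
      calc b * (dB * dC) = (b * dB) * dC := by ring
        _ = nB * dC := by rw [hb]
        _ = nC * dB := kbc
        _ = (c * dC) * dB := by rw [hc]
        _ = c * (dB * dC) := by ring
    exact mul_right_cancel₀ (mul_ne_zero hdB0 hdC0) this
end

section
/- Let L(x₁,x₂,ᾱ) be the 2×2 matrix with entries L₁₁ = α₁ζ + αx₂/(α₁x₁ − α₂x₂), L₁₂ = −αx₁x₂/(α₁x₁ − α₂x₂), L₂₁ = α/(α₁x₁ − α₂x₂), L₂₂ = α₂ζ − αx₁/(α₁x₁ − α₂x₂), where ᾱ = (α,α₁,α₂) and ζ is a spectral parameter. If w₂ satisfies the multiparametric cross-ratio equation α(β₁w − β₂w₂)(β₁w₁ − β₂w₁₂) = β(α₁w − α₂w₁)(α₁w₂ − α₂w₁₂), then for all ζ the Lax equation L(w₂,w₁₂,ᾱ) · L(w,w₂,β̄) = L(w₁,w₁₂,β̄) · L(w,w₁,ᾱ) holds (assuming all denominators are nonzero). -/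
open Matrix

/-- Lax matrix of the multiparametric cross-ratio equation,
with parameter triple `ᾱ = (α, α₁, α₂)` and spectral parameter `ζ`. -/
noncomputable def Lcr (x₁ x₂ α α₁ α₂ ζ : ℂ) : Matrix (Fin 2) (Fin 2) ℂ :=
  !![α₁ * ζ + α * x₂ / (α₁ * x₁ - α₂ * x₂), -(α * x₁ * x₂) / (α₁ * x₁ - α₂ * x₂);
     α / (α₁ * x₁ - α₂ * x₂), α₂ * ζ - α * x₁ / (α₁ * x₁ - α₂ * x₂)]

set_option maxHeartbeats 4000000 in
/-- If `w₂` satisfies the multiparametric cross-ratio equation, then the Lax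
equation `L(w₂,w₁₂,ᾱ)·L(w,w₂,β̄) = L(w₁,w₁₂,β̄)·L(w,w₁,ᾱ)` holds for all ζ
(assuming all denominators are nonzero). -/
theorem multiparametric_crossratio_Lax (w w₁ w₂ w₁₂ α α₁ α₂ β β₁ β₂ : ℂ)
    (hQ : α * (β₁ * w - β₂ * w₂) * (β₁ * w₁ - β₂ * w₁₂)
        = β * (α₁ * w - α₂ * w₁) * (α₁ * w₂ - α₂ * w₁₂))
    (hd1 : α₁ * w₂ - α₂ * w₁₂ ≠ 0)
    (hd2 : β₁ * w - β₂ * w₂ ≠ 0)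
    (hd3 : β₁ * w₁ - β₂ * w₁₂ ≠ 0)
    (hd4 : α₁ * w - α₂ * w₁ ≠ 0) :
    ∀ ζ : ℂ, Lcr w₂ w₁₂ α α₁ α₂ ζ * Lcr w w₂ β β₁ β₂ ζ
           = Lcr w₁ w₁₂ β β₁ β₂ ζ * Lcr w w₁ α α₁ α₂ ζ := by
  have hz : α * (β₁ * w - β₂ * w₂) * (β₁ * w₁ - β₂ * w₁₂)
      - β * (α₁ * w - α₂ * w₁) * (α₁ * w₂ - α₂ * w₁₂) = 0 := sub_eq_zero.mpr hQ
  intro ζ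
  have key : ∀ c : ℂ, c * (α * (β₁ * w - β₂ * w₂) * (β₁ * w₁ - β₂ * w₁₂)
      - β * (α₁ * w - α₂ * w₁) * (α₁ * w₂ - α₂ * w₁₂))
      / ((α₁ * w₂ - α₂ * w₁₂) * (β₁ * w - β₂ * w₂) * (β₁ * w₁ - β₂ * w₁₂)
        * (α₁ * w - α₂ * w₁)) = 0 := by intro c; rw [hz]; simp
  have h1' : α₁ * w₂ - w₁₂ * α₂ ≠ 0 := by rw [mul_comm w₁₂]; exact hd1
  have h2' : β₁ * w - w₂ * β₂ ≠ 0 := by rw [mul_comm w₂]; exact hd2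
  have h3' : β₁ * w₁ - w₁₂ * β₂ ≠ 0 := by rw [mul_comm w₁₂]; exact hd3
  have h4' : α₁ * w - α₂ * w₁ ≠ 0 := hd4
  have h5' : w * β₁ - w₂ * β₂ ≠ 0 := by rw [mul_comm w, mul_comm w₂]; exact hd2
  ext i j
  fin_cases i <;> fin_cases j <;>
    simp only [Lcr, Matrix.mul_apply, Fin.sum_univ_two, Matrix.cons_val', Matrix.cons_val_zero,
      Matrix.cons_val_one, Matrix.head_cons, Matrix.head_fin_const, Matrix.empty_val',
      Matrix.cons_val_fin_one, Matrix.of_apply, Fin.zero_eta, Fin.mk_one] <;>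
    rw [← sub_eq_zero]
  · rw [← key ((w * w₁₂ - w₁ * w₂) * α₁ * β₁ * ζ)]
    field_simp [h1', h2', h3', h4', h5']
    ring
  · rw [← key ((w₁ * w₂ * w₁₂ * α₂ * β₂ - w * w₂ * w₁₂ * α₁ * β₂
        - w * w₁ * w₁₂ * α₂ * β₁ + w * w₁ * w₂ * α₁ * β₁) * ζ)]
    field_simp [h1', h2', h3', h4', h5']
    ring
  · rw [← key ((w₁₂ * α₂ * β₂ - w₂ * α₁ * β₂ - w₁ * α₂ * β₁ + w * α₁ * β₁) * ζ)]
    field_simp [h1', h2', h3', h4', h5']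
    ring
  · rw [← key ((w₁ * w₂ - w * w₁₂) * α₂ * β₂ * ζ)]
    field_simp [h1', h2', h3', h4', h5']
    ring
end

section
/- Let F(x,x₁,x₂,α,β) = x + (α−β)/(x₁−x₂) (from the H₁ equation). Define the (2,2) periodic reduction map S_{α,β}(x₁,x₂,x₃,x₄) = (x₁',x₂',x₃',x₄') by x₂' = F(x₂,x₃,x₁,α,β), x₄' = F(x₄,x₁,x₃,α,β), x₃' = F(x₃,x₄',x₂',α,β), x₁' = F(x₁,x₂',x₄',α,β). Then S_{α,β} preserves the symplectic form dx₁∧dx₂ + dx₃∧dx₄; equivalently, S_{α,β} is a Poisson map for the bracket {x₁,x₂}=1, {x₃,x₄}=1, all other coordinate brackets zero. -/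
/-- F from the H₁ equation: `F(x,x₁,x₂,α,β) = x + (α−β)/(x₁−x₂)`. -/
noncomputable def FH1 (α β x x₁ x₂ : ℂ) : ℂ := x + (α - β) / (x₁ - x₂)

noncomputable def X2' (α β x₁ x₂ x₃ x₄ : ℂ) : ℂ := FH1 α β x₂ x₃ x₁
noncomputable def X4' (α β x₁ x₂ x₃ x₄ : ℂ) : ℂ := FH1 α β x₄ x₁ x₃
noncomputable def X3' (α β x₁ x₂ x₃ x₄ : ℂ) : ℂ :=
  FH1 α β x₃ (X4' α β x₁ x₂ x₃ x₄) (X2' α β x₁ x₂ x₃ x₄)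
noncomputable def X1' (α β x₁ x₂ x₃ x₄ : ℂ) : ℂ :=
  FH1 α β x₁ (X2' α β x₁ x₂ x₃ x₄) (X4' α β x₁ x₂ x₃ x₄)

lemma hdivC {w : ℂ → ℂ} {w' t : ℂ} (γ : ℂ) (hw : HasDerivAt w w' t) (h : w t ≠ 0) :
    HasDerivAt (fun s => γ / w s) (-(γ * w') / w t ^ 2) t := by
  have h2 := (hasDerivAt_const t γ).div hw h
  exact h2.congr_deriv (by ring)

/-- The (2,2) periodic reduction of H₁ is a Poisson map for the canonical
bracket `{x₁,x₂} = 1`, `{x₃,x₄} = 1`, equivalently it preserves the symplectic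
form `dx₁∧dx₂ + dx₃∧dx₄`. -/
theorem H1_reduction_Poisson (α β x₁ x₂ x₃ x₄ : ℂ)
    (h₁ : x₁ ≠ x₃)
    (h₂ : X2' α β x₁ x₂ x₃ x₄ ≠ X4' α β x₁ x₂ x₃ x₄) :
    pb (X1' α β) (X2' α β) x₁ x₂ x₃ x₄ = 1 ∧
    pb (X3' α β) (X4' α β) x₁ x₂ x₃ x₄ = 1 ∧
    pb (X1' α β) (X3' α β) x₁ x₂ x₃ x₄ = 0 ∧
    pb (X1' α β) (X4' α β) x₁ x₂ x₃ x₄ = 0 ∧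
    pb (X2' α β) (X3' α β) x₁ x₂ x₃ x₄ = 0 ∧
    pb (X2' α β) (X4' α β) x₁ x₂ x₃ x₄ = 0 := by
  have hu : x₃ - x₁ ≠ 0 := sub_ne_zero.mpr (Ne.symm h₁)
  have hu' : x₁ - x₃ ≠ 0 := sub_ne_zero.mpr h₁
  have hD : (x₂ + (α - β) / (x₃ - x₁)) - (x₄ + (α - β) / (x₁ - x₃)) ≠ 0 := by
    simpa only [X2', X4', FH1] using sub_ne_zero.mpr h₂
  have hD' : (x₄ + (α - β) / (x₁ - x₃)) - (x₂ + (α - β) / (x₃ - x₁)) ≠ 0 := by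
    simpa only [X2', X4', FH1] using sub_ne_zero.mpr (Ne.symm h₂)
  -- abbreviations for the clean derivative values
  -- P = (α-β)/(x₃-x₁)^2, R = (α-β)/D^2
  -- X2' derivatives
  have e1 : d1 (X2' α β) x₁ x₂ x₃ x₄ = (α - β) / (x₃ - x₁) ^ 2 := by
    have H : HasDerivAt (fun t => x₂ + (α - β) / (x₃ - t)) ((α - β) / (x₃ - x₁) ^ 2) x₁ := by
      have h := (hdivC (α - β) ((hasDerivAt_id x₁).const_sub x₃) hu).const_add x₂
      exact h.congr_deriv (by simp only [id_eq, Pi.sub_apply]; ring)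
    exact H.deriv
  have e2 : d2 (X2' α β) x₁ x₂ x₃ x₄ = 1 := by
    have H : HasDerivAt (fun t => t + (α - β) / (x₃ - x₁)) 1 x₂ := (hasDerivAt_id x₂).add_const _
    exact H.deriv
  have e3 : d3 (X2' α β) x₁ x₂ x₃ x₄ = -((α - β) / (x₃ - x₁) ^ 2) := by
    have H : HasDerivAt (fun t => x₂ + (α - β) / (t - x₁)) (-((α - β) / (x₃ - x₁) ^ 2)) x₃ := by
      have h := (hdivC (α - β) ((hasDerivAt_id x₃).sub_const x₁) hu).const_add x₂
      exact h.congr_deriv (by simp only [id_eq, Pi.sub_apply]; ring)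
    exact H.deriv
  have e4 : d4 (X2' α β) x₁ x₂ x₃ x₄ = 0 := by
    have H : HasDerivAt (fun _ : ℂ => x₂ + (α - β) / (x₃ - x₁)) 0 x₄ := hasDerivAt_const _ _
    exact H.deriv
  -- X4' derivatives
  have e5 : d1 (X4' α β) x₁ x₂ x₃ x₄ = -((α - β) / (x₃ - x₁) ^ 2) := by
    have H : HasDerivAt (fun t => x₄ + (α - β) / (t - x₃)) (-((α - β) / (x₃ - x₁) ^ 2)) x₁ := by
      have h := (hdivC (α - β) ((hasDerivAt_id x₁).sub_const x₃) hu').const_add x₄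
      exact h.congr_deriv (by simp only [id_eq, Pi.sub_apply]; ring)
    exact H.deriv
  have e6 : d2 (X4' α β) x₁ x₂ x₃ x₄ = 0 := by
    have H : HasDerivAt (fun _ : ℂ => x₄ + (α - β) / (x₁ - x₃)) 0 x₂ := hasDerivAt_const _ _
    exact H.deriv
  have e7 : d3 (X4' α β) x₁ x₂ x₃ x₄ = (α - β) / (x₃ - x₁) ^ 2 := by
    have H : HasDerivAt (fun t => x₄ + (α - β) / (x₁ - t)) ((α - β) / (x₃ - x₁) ^ 2) x₃ := by
      have h := (hdivC (α - β) ((hasDerivAt_id x₃).const_sub x₁) hu').const_add x₄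
      exact h.congr_deriv (by simp only [id_eq, Pi.sub_apply]; ring)
    exact H.deriv
  have e8 : d4 (X4' α β) x₁ x₂ x₃ x₄ = 1 := by
    have H : HasDerivAt (fun t => t + (α - β) / (x₁ - x₃)) 1 x₄ := (hasDerivAt_id x₄).add_const _
    exact H.deriv
  -- X1' derivatives
  have e9 : d1 (X1' α β) x₁ x₂ x₃ x₄ =
      1 - 2 * ((α - β) / (x₃ - x₁) ^ 2) *
        ((α - β) / ((x₂ + (α - β) / (x₃ - x₁)) - (x₄ + (α - β) / (x₁ - x₃))) ^ 2) := by
    have hw := (((hdivC (α - β) ((hasDerivAt_id x₁).const_sub x₃) hu).const_add x₂).sub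
      ((hdivC (α - β) ((hasDerivAt_id x₁).sub_const x₃) hu').const_add x₄))
    have H := (hasDerivAt_id x₁).add (hdivC (α - β) hw (by simpa only [id_eq, Pi.sub_apply] using hD))
    have H2 : HasDerivAt
        (fun t => t + (α - β) / ((x₂ + (α - β) / (x₃ - t)) - (x₄ + (α - β) / (t - x₃))))
        (1 - 2 * ((α - β) / (x₃ - x₁) ^ 2) *
          ((α - β) / ((x₂ + (α - β) / (x₃ - x₁)) - (x₄ + (α - β) / (x₁ - x₃))) ^ 2)) x₁ := by
      exact H.congr_deriv (by simp only [id_eq, Pi.sub_apply]; ring)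
    exact H2.deriv
  have e10 : d2 (X1' α β) x₁ x₂ x₃ x₄ =
      -((α - β) / ((x₂ + (α - β) / (x₃ - x₁)) - (x₄ + (α - β) / (x₁ - x₃))) ^ 2) := by
    have hw := (((hasDerivAt_id x₂).add_const ((α - β) / (x₃ - x₁))).sub_const
      (x₄ + (α - β) / (x₁ - x₃)))
    have H := (hasDerivAt_const x₂ x₁).add
      (hdivC (α - β) hw (by simpa only [id_eq, Pi.sub_apply] using hD))
    have H2 : HasDerivAt
        (fun t => x₁ + (α - β) / ((t + (α - β) / (x₃ - x₁)) - (x₄ + (α - β) / (x₁ - x₃))))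
        (-((α - β) / ((x₂ + (α - β) / (x₃ - x₁)) - (x₄ + (α - β) / (x₁ - x₃))) ^ 2)) x₂ := by
      exact H.congr_deriv (by simp only [id_eq, Pi.sub_apply]; ring)
    exact H2.deriv
  have e11 : d3 (X1' α β) x₁ x₂ x₃ x₄ =
      2 * ((α - β) / (x₃ - x₁) ^ 2) *
        ((α - β) / ((x₂ + (α - β) / (x₃ - x₁)) - (x₄ + (α - β) / (x₁ - x₃))) ^ 2) := by
    have hw := (((hdivC (α - β) ((hasDerivAt_id x₃).sub_const x₁) hu).const_add x₂).sub
      ((hdivC (α - β) ((hasDerivAt_id x₃).const_sub x₁) hu').const_add x₄))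
    have H := (hasDerivAt_const x₃ x₁).add
      (hdivC (α - β) hw (by simpa only [id_eq, Pi.sub_apply] using hD))
    have H2 : HasDerivAt
        (fun t => x₁ + (α - β) / ((x₂ + (α - β) / (t - x₁)) - (x₄ + (α - β) / (x₁ - t))))
        (2 * ((α - β) / (x₃ - x₁) ^ 2) *
          ((α - β) / ((x₂ + (α - β) / (x₃ - x₁)) - (x₄ + (α - β) / (x₁ - x₃))) ^ 2)) x₃ := by
      exact H.congr_deriv (by simp only [id_eq, Pi.sub_apply]; ring)
    exact H2.deriv
  have e12 : d4 (X1' α β) x₁ x₂ x₃ x₄ =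
      (α - β) / ((x₂ + (α - β) / (x₃ - x₁)) - (x₄ + (α - β) / (x₁ - x₃))) ^ 2 := by
    have hw := (((hasDerivAt_id x₄).add_const ((α - β) / (x₁ - x₃))).const_sub
      (x₂ + (α - β) / (x₃ - x₁)))
    have H := (hasDerivAt_const x₄ x₁).add
      (hdivC (α - β) hw (by simpa only [id_eq, Pi.sub_apply] using hD))
    have H2 : HasDerivAt
        (fun t => x₁ + (α - β) / ((x₂ + (α - β) / (x₃ - x₁)) - (t + (α - β) / (x₁ - x₃))))
        ((α - β) / ((x₂ + (α - β) / (x₃ - x₁)) - (x₄ + (α - β) / (x₁ - x₃))) ^ 2) x₄ := by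
      exact H.congr_deriv (by simp only [id_eq, Pi.sub_apply]; ring)
    exact H2.deriv
  -- X3' derivatives
  have e13 : d1 (X3' α β) x₁ x₂ x₃ x₄ =
      2 * ((α - β) / (x₃ - x₁) ^ 2) *
        ((α - β) / ((x₂ + (α - β) / (x₃ - x₁)) - (x₄ + (α - β) / (x₁ - x₃))) ^ 2) := by
    have hw := (((hdivC (α - β) ((hasDerivAt_id x₁).sub_const x₃) hu').const_add x₄).sub
      ((hdivC (α - β) ((hasDerivAt_id x₁).const_sub x₃) hu).const_add x₂))
    have H := (hasDerivAt_const x₁ x₃).add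
      (hdivC (α - β) hw (by simpa only [id_eq, Pi.sub_apply] using hD'))
    have H2 : HasDerivAt
        (fun t => x₃ + (α - β) / ((x₄ + (α - β) / (t - x₃)) - (x₂ + (α - β) / (x₃ - t))))
        (2 * ((α - β) / (x₃ - x₁) ^ 2) *
          ((α - β) / ((x₂ + (α - β) / (x₃ - x₁)) - (x₄ + (α - β) / (x₁ - x₃))) ^ 2)) x₁ := by
      exact H.congr_deriv (by simp only [id_eq, Pi.sub_apply]; ring)
    exact H2.deriv
  have e14 : d2 (X3' α β) x₁ x₂ x₃ x₄ =
      (α - β) / ((x₂ + (α - β) / (x₃ - x₁)) - (x₄ + (α - β) / (x₁ - x₃))) ^ 2 := by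
    have hw := (((hasDerivAt_id x₂).add_const ((α - β) / (x₃ - x₁))).const_sub
      (x₄ + (α - β) / (x₁ - x₃)))
    have H := (hasDerivAt_const x₂ x₃).add
      (hdivC (α - β) hw (by simpa only [id_eq, Pi.sub_apply] using hD'))
    have H2 : HasDerivAt
        (fun t => x₃ + (α - β) / ((x₄ + (α - β) / (x₁ - x₃)) - (t + (α - β) / (x₃ - x₁))))
        ((α - β) / ((x₂ + (α - β) / (x₃ - x₁)) - (x₄ + (α - β) / (x₁ - x₃))) ^ 2) x₂ := by
      exact H.congr_deriv (by simp only [id_eq, Pi.sub_apply]; ring)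
    exact H2.deriv
  have e15 : d3 (X3' α β) x₁ x₂ x₃ x₄ =
      1 - 2 * ((α - β) / (x₃ - x₁) ^ 2) *
        ((α - β) / ((x₂ + (α - β) / (x₃ - x₁)) - (x₄ + (α - β) / (x₁ - x₃))) ^ 2) := by
    have hw := (((hdivC (α - β) ((hasDerivAt_id x₃).const_sub x₁) hu').const_add x₄).sub
      ((hdivC (α - β) ((hasDerivAt_id x₃).sub_const x₁) hu).const_add x₂))
    have H := (hasDerivAt_id x₃).add (hdivC (α - β) hw (by simpa only [id_eq, Pi.sub_apply] using hD'))
    have H2 : HasDerivAt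
        (fun t => t + (α - β) / ((x₄ + (α - β) / (x₁ - t)) - (x₂ + (α - β) / (t - x₁))))
        (1 - 2 * ((α - β) / (x₃ - x₁) ^ 2) *
          ((α - β) / ((x₂ + (α - β) / (x₃ - x₁)) - (x₄ + (α - β) / (x₁ - x₃))) ^ 2)) x₃ := by
      exact H.congr_deriv (by simp only [id_eq, Pi.sub_apply]; ring)
    exact H2.deriv
  have e16 : d4 (X3' α β) x₁ x₂ x₃ x₄ =
      -((α - β) / ((x₂ + (α - β) / (x₃ - x₁)) - (x₄ + (α - β) / (x₁ - x₃))) ^ 2) := by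
    have hw := (((hasDerivAt_id x₄).add_const ((α - β) / (x₁ - x₃))).sub_const
      (x₂ + (α - β) / (x₃ - x₁)))
    have H := (hasDerivAt_const x₄ x₃).add
      (hdivC (α - β) hw (by simpa only [id_eq, Pi.sub_apply] using hD'))
    have H2 : HasDerivAt
        (fun t => x₃ + (α - β) / ((t + (α - β) / (x₁ - x₃)) - (x₂ + (α - β) / (x₃ - x₁))))
        (-((α - β) / ((x₂ + (α - β) / (x₃ - x₁)) - (x₄ + (α - β) / (x₁ - x₃))) ^ 2)) x₄ := by
      exact H.congr_deriv (by simp only [id_eq, Pi.sub_apply]; ring)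
    exact H2.deriv
  refine ⟨?_, ?_, ?_, ?_, ?_, ?_⟩ <;>
    simp only [pb, e1, e2, e3, e4, e5, e6, e7, e8, e9, e10, e11, e12, e13, e14, e15, e16] <;>
    ring
end

section
/- The map R^ε_{α,β}(x₁,x₂,y₁,y₂) = (u₁,u₂,v₁,v₂) with u₁ = (α₂/β₂)y₁ − ε²(α₁β₂ − α₂β₁)x₁ / [β₂(α₂β₂ + ε²x₁y₂)], u₂ = y₂, v₁ = x₁, v₂ = (β₂/α₂)x₂ + ε²(α₁β₂ − α₂β₁)y₂ / [α₂(α₂β₂ + ε²x₁y₂)], with vector parameters α = (α₁,α₂), β = (β₁,β₂), admits as strong Lax matrix the 2×2 matrix L(x₁,x₂;α) with entries L₁₁ = (ε/α₂)(α₁ + x₁x₂) − εζ, L₁₂ = x₁, L₂₁ = x₂, L₂₂ = α₂/ε; that is, L(u₁,u₂;α)L(v₁,v₂;β) = L(y₁,y₂;β)L(x₁,x₂;α) holds identically in ζ. -/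
open Matrix

/-- Lax matrix of the multiparametric NLS (generalized Adler–Yamilov) map. -/
noncomputable def LNLS (ε x₁ x₂ γ₁ γ₂ ζ : ℂ) : Matrix (Fin 2) (Fin 2) ℂ :=
  !![(ε / γ₂) * (γ₁ + x₁ * x₂) - ε * ζ, x₁; x₂, γ₂ / ε]

set_option maxHeartbeats 1600000 in
/-- The generalized Adler–Yamilov map `R^ε_{α,β}` admits `LNLS` as Lax matrix:
`L(u₁,u₂;α)·L(v₁,v₂;β) = L(y₁,y₂;β)·L(x₁,x₂;α)` identically in ζ. -/
theorem NLS_lift_Lax (ε α₁ α₂ β₁ β₂ x₁ x₂ y₁ y₂ u₁ u₂ v₁ v₂ : ℂ)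
    (hε : ε ≠ 0) (hα₂ : α₂ ≠ 0) (hβ₂ : β₂ ≠ 0)
    (hD : α₂ * β₂ + ε ^ 2 * x₁ * y₂ ≠ 0)
    (hu₁ : u₁ = (α₂ / β₂) * y₁ -
      ε ^ 2 * (α₁ * β₂ - α₂ * β₁) * x₁ / (β₂ * (α₂ * β₂ + ε ^ 2 * x₁ * y₂)))
    (hu₂ : u₂ = y₂) (hv₁ : v₁ = x₁)
    (hv₂ : v₂ = (β₂ / α₂) * x₂ +
      ε ^ 2 * (α₁ * β₂ - α₂ * β₁) * y₂ / (α₂ * (α₂ * β₂ + ε ^ 2 * x₁ * y₂))) :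
    ∀ ζ : ℂ, LNLS ε u₁ u₂ α₁ α₂ ζ * LNLS ε v₁ v₂ β₁ β₂ ζ
           = LNLS ε y₁ y₂ β₁ β₂ ζ * LNLS ε x₁ x₂ α₁ α₂ ζ := by
  intro ζ
  obtain ⟨d, hd⟩ : ∃ d, α₂ * β₂ + ε ^ 2 * x₁ * y₂ = d := ⟨_, rfl⟩
  rw [hd] at hD hu₁ hv₂
  subst hu₁ hu₂ hv₁ hv₂
  ext i j
  fin_cases i <;> fin_cases j <;>
    simp [LNLS, Matrix.mul_apply, Fin.sum_univ_two] <;> field_simp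
  · have hC : α₂ * (β₂ * (β₂ * d)) * (β₂ * (α₂ * (α₂ * d))) ≠ 0 := by
      simp [mul_eq_zero, hα₂, hβ₂, hD]
    rw [← hd]
    ring
  · have hC : α₂ * (β₂ * (β₂ * d)) * (β₂ * (β₂ * d) * ε) ≠ 0 := by
      simp [mul_eq_zero, hα₂, hβ₂, hD, hε]
    rw [← hd]
    ring
  · have hC : β₂ * (α₂ * (α₂ * d)) * (ε * (α₂ * (α₂ * d))) ≠ 0 := by
      simp [mul_eq_zero, hα₂, hβ₂, hD, hε]
    rw [← hd]
    ring
end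

section
/- (Proposition 5.1(α), specialized.) If (t₂, w₂) satisfy the multiparametric lattice NLS system α₂²β₂t₁ − β₂²α₂t₂ − ε²t((β₂w₁ − α₂w₂)t + α₁β₂ − α₂β₁) = 0 and β₂²α₂w₁ − α₂²β₂w₂ + ε²w₁₂((β₂w₁ − α₂w₂)t + α₁β₂ − α₂β₁) = 0, then the Lax equation L(t₂,w₁₂;α)L(t,w₂;β) = L(t₁,w₁₂;β)L(t,w₁;α) holds identically in the spectral parameter ζ, where L(x₁,x₂;γ) is the matrix with entries L₁₁ = (ε/γ₂)(γ₁ + x₁x₂) − εζ, L₁₂ = x₁, L₂₁ = x₂, L₂₂ = γ₂/ε, γ = (γ₁,γ₂). -/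
open Matrix

/-- If `(t₂, w₂)` satisfy the multiparametric lattice NLS system, then the Lax
equation `L(t₂,w₁₂;α)L(t,w₂;β) = L(t₁,w₁₂;β)L(t,w₁;α)` holds for all ζ. -/
theorem NLS_system_Lax (ε α₁ α₂ β₁ β₂ t t₁ t₂ w₁ w₂ w₁₂ : ℂ)
    (hε : ε ≠ 0) (hα₂ : α₂ ≠ 0) (hβ₂ : β₂ ≠ 0)
    (h1 : α₂ ^ 2 * β₂ * t₁ - β₂ ^ 2 * α₂ * t₂
        - ε ^ 2 * t * ((β₂ * w₁ - α₂ * w₂) * t + α₁ * β₂ - α₂ * β₁) = 0)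
    (h2 : β₂ ^ 2 * α₂ * w₁ - α₂ ^ 2 * β₂ * w₂
        + ε ^ 2 * w₁₂ * ((β₂ * w₁ - α₂ * w₂) * t + α₁ * β₂ - α₂ * β₁) = 0) :
    ∀ ζ : ℂ, LNLS ε t₂ w₁₂ α₁ α₂ ζ * LNLS ε t w₂ β₁ β₂ ζ
           = LNLS ε t₁ w₁₂ β₁ β₂ ζ * LNLS ε t w₁ α₁ α₂ ζ := by
  intro ζ
  ext i j
  fin_cases i <;> fin_cases j <;>
    simp [LNLS, Matrix.mul_apply, Fin.sum_univ_two] <;>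
    field_simp
  · apply mul_left_cancel₀ (mul_ne_zero hα₂ (pow_ne_zero 2 hβ₂))
    linear_combination
      (ε^2*ζ*w₁₂*β₂ - ε^2*β₁*w₁₂ - (ε^2*t*w₁₂ + α₂*β₂)*w₂) * h1 +
      (ε^2*ζ*t*β₂ - (ε^2*t*w₁₂ + α₂*β₂)*t₁ - ε^2*t*(β₁ + t*w₂ - t₁*w₁₂)) * h2
  · apply mul_left_cancel₀ (mul_ne_zero hα₂ hβ₂)
    linear_combination
      (-(ε^2*t*w₁₂ + α₂*β₂)) * h1 + (-(ε^2*t^2)) * h2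
  · linear_combination (-1) * h2
end

section
/- The sum I = x₁ + x₂ + x₃ + x₄ is invariant under the (2,2) periodic reduction of the H₁ equation: with F(x,x₁,x₂,α,β) = x + (α−β)/(x₁−x₂) and S_{α,β}(x₁,x₂,x₃,x₄) = (x₁',x₂',x₃',x₄') defined by x₂' = F(x₂,x₃,x₁,α,β), x₄' = F(x₄,x₁,x₃,α,β), x₃' = F(x₃,x₄',x₂',α,β), x₁' = F(x₁,x₂',x₄',α,β), one has x₁' + x₂' + x₃' + x₄' = x₁ + x₂ + x₃ + x₄. -/
/-- `I = x₁+x₂+x₃+x₄` is an invariant of the (2,2) periodic reduction of H₁. -/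
theorem H1_reduction_sum_invariant (α β x₁ x₂ x₃ x₄ x₁' x₂' x₃' x₄' : ℂ)
    (h₁ : x₁ ≠ x₃)
    (hx₂' : x₂' = FH1 α β x₂ x₃ x₁)
    (hx₄' : x₄' = FH1 α β x₄ x₁ x₃)
    (h₂ : x₂' ≠ x₄')
    (hx₃' : x₃' = FH1 α β x₃ x₄' x₂')
    (hx₁' : x₁' = FH1 α β x₁ x₂' x₄') :
    x₁' + x₂' + x₃' + x₄' = x₁ + x₂ + x₃ + x₄ := by
  have key : ∀ a b : ℂ, (α - β) / (a - b) + (α - β) / (b - a) = 0 := by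
    intro a b
    rw [← neg_sub b a, div_neg]
    ring
  have e1 : x₂' + x₄' = x₂ + x₄ := by
    rw [hx₂', hx₄']
    simp only [FH1]
    have := key x₃ x₁
    linear_combination this
  have e2 : x₁' + x₃' = x₁ + x₃ := by
    rw [hx₁', hx₃']
    simp only [FH1]
    have := key x₂' x₄'
    linear_combination this
  linear_combination e1 + e2
end

section
/- The cross-ratio I = (x₁−x₂)(x₃−x₄)/[(x₂−x₃)(x₁−x₄)] is invariant under the (2,2) periodic reduction of the cross-ratio equation Q₁^{δ=0}: with F(x,x₁,x₂,α,β) = [αx₁(x−x₂) + βx₂(x₁−x)]/[α(x−x₂) + β(x₁−x)] and S_{α,β}(x₁,x₂,x₃,x₄) = (x₁',x₂',x₃',x₄') defined by x₂' = F(x₂,x₃,x₁,α,β), x₄' = F(x₄,x₁,x₃,α,β), x₃' = F(x₃,x₄',x₂',α,β), x₁' = F(x₁,x₂',x₄',α,β), one has (x₁'−x₂')(x₃'−x₄')/[(x₂'−x₃')(x₁'−x₄')] = (x₁−x₂)(x₃−x₄)/[(x₂−x₃)(x₁−x₄)]. -/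
lemma cancel1 (α β a b c d e D₁ D₃ : ℂ) (hD₁ : D₁ ≠ 0) (hD₃ : D₃ ≠ 0)
    (hα : α ≠ 0) (hc : c ≠ 0) (hd : d ≠ 0) (he : e ≠ 0) :
    (β * a * e / D₁) * (β * b * (-e) / D₃) / ((-(α * c * e / D₃)) * (α * d * (-e) / D₁))
      = -(β ^ 2 * (a * b)) / (α ^ 2 * (c * d)) := by
  have hk : e ^ 2 / (D₁ * D₃) ≠ 0 :=
    div_ne_zero (pow_ne_zero _ he) (mul_ne_zero hD₁ hD₃)
  have h : (β * a * e / D₁) * (β * b * (-e) / D₃) / ((-(α * c * e / D₃)) * (α * d * (-e) / D₁))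
      = (-(β ^ 2 * (a * b)) * (e ^ 2 / (D₁ * D₃))) / ((α ^ 2 * (c * d)) * (e ^ 2 / (D₁ * D₃))) := by
    ring
  rw [h, mul_div_mul_right _ _ hk]

lemma cancel2 (α β D₂ D₄ y₁ y₂ y₃ y₄ : ℂ) (hD₂ : D₂ ≠ 0) (hD₄ : D₄ ≠ 0)
    (hα : α ≠ 0) (hβ : β ≠ 0) (h13 : y₁ - y₃ ≠ 0) :
    -(β ^ 2 * ((α * (y₂ - y₁) * (y₃ - y₁) / D₂) * (α * (y₄ - y₃) * (y₁ - y₃) / D₄)))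
        / (α ^ 2 * ((-(β * (y₃ - y₂) * (y₁ - y₃) / D₂)) * (-(β * (y₁ - y₄) * (y₃ - y₁) / D₄))))
      = (y₁ - y₂) * (y₃ - y₄) / ((y₂ - y₃) * (y₁ - y₄)) := by
  have h31 : y₃ - y₁ ≠ 0 := fun h => h13 (by linear_combination -h)
  have hk : -(α ^ 2 * β ^ 2 * (y₃ - y₁) * (y₁ - y₃) / (D₂ * D₄)) ≠ 0 := by
    refine neg_ne_zero.mpr (div_ne_zero ?_ (mul_ne_zero hD₂ hD₄))
    exact mul_ne_zero (mul_ne_zero (mul_ne_zero (pow_ne_zero _ hα) (pow_ne_zero _ hβ)) h31) h13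
  have h : -(β ^ 2 * ((α * (y₂ - y₁) * (y₃ - y₁) / D₂) * (α * (y₄ - y₃) * (y₁ - y₃) / D₄)))
        / (α ^ 2 * ((-(β * (y₃ - y₂) * (y₁ - y₃) / D₂)) * (-(β * (y₁ - y₄) * (y₃ - y₁) / D₄))))
      = ((y₁ - y₂) * (y₃ - y₄) * (-(α ^ 2 * β ^ 2 * (y₃ - y₁) * (y₁ - y₃) / (D₂ * D₄))))
        / ((y₂ - y₃) * (y₁ - y₄) * (-(α ^ 2 * β ^ 2 * (y₃ - y₁) * (y₁ - y₃) / (D₂ * D₄)))) := by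
    ring
  rw [h, mul_div_mul_right _ _ hk]

/-- F from the cross-ratio (Q₁^{δ=0}) equation. -/
noncomputable def FQ1 (α β x x₁ x₂ : ℂ) : ℂ :=
  (α * x₁ * (x - x₂) + β * x₂ * (x₁ - x)) / (α * (x - x₂) + β * (x₁ - x))

lemma FQ1_sub_a (α β x a b : ℂ) (hD : α * (x - b) + β * (a - x) ≠ 0) :
    FQ1 α β x a b - a = β * (a - x) * (b - a) / (α * (x - b) + β * (a - x)) := by
  rw [FQ1, div_sub' hD]
  congr 1; ring

lemma FQ1_sub_b (α β x a b : ℂ) (hD : α * (x - b) + β * (a - x) ≠ 0) :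
    FQ1 α β x a b - b = α * (x - b) * (a - b) / (α * (x - b) + β * (a - x)) := by
  rw [FQ1, div_sub' hD]
  congr 1; ring

lemma a_sub_FQ1 (α β x a b : ℂ) (hD : α * (x - b) + β * (a - x) ≠ 0) :
    a - FQ1 α β x a b = -(β * (a - x) * (b - a) / (α * (x - b) + β * (a - x))) := by
  rw [← FQ1_sub_a α β x a b hD]; ring

lemma b_sub_FQ1 (α β x a b : ℂ) (hD : α * (x - b) + β * (a - x) ≠ 0) :
    b - FQ1 α β x a b = -(α * (x - b) * (a - b) / (α * (x - b) + β * (a - x))) := by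
  rw [← FQ1_sub_b α β x a b hD]; ring

/-- The cross-ratio `(x₁−x₂)(x₃−x₄)/[(x₂−x₃)(x₁−x₄)]` is an invariant of the
(2,2) periodic reduction of the cross-ratio equation. -/
theorem Q1_reduction_crossratio_invariant (α β x₁ x₂ x₃ x₄ x₁' x₂' x₃' x₄' : ℂ)
    (hd₂ : α * (x₂ - x₁) + β * (x₃ - x₂) ≠ 0)
    (hd₄ : α * (x₄ - x₃) + β * (x₁ - x₄) ≠ 0)
    (hx₂' : x₂' = FQ1 α β x₂ x₃ x₁)
    (hx₄' : x₄' = FQ1 α β x₄ x₁ x₃)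
    (hd₃ : α * (x₃ - x₂') + β * (x₄' - x₃) ≠ 0)
    (hd₁ : α * (x₁ - x₄') + β * (x₂' - x₁) ≠ 0)
    (hx₃' : x₃' = FQ1 α β x₃ x₄' x₂')
    (hx₁' : x₁' = FQ1 α β x₁ x₂' x₄')
    (hcr : (x₂ - x₃) * (x₁ - x₄) ≠ 0)
    (hcr' : (x₂' - x₃') * (x₁' - x₄') ≠ 0) :
    (x₁' - x₂') * (x₃' - x₄') / ((x₂' - x₃') * (x₁' - x₄'))
      = (x₁ - x₂) * (x₃ - x₄) / ((x₂ - x₃) * (x₁ - x₄)) := by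
  -- first-stage differences
  have h5 : x₂' - x₁ = α * (x₂ - x₁) * (x₃ - x₁) / (α * (x₂ - x₁) + β * (x₃ - x₂)) := by
    rw [hx₂']; exact FQ1_sub_b α β x₂ x₃ x₁ hd₂
  have h6 : x₃ - x₂' = -(β * (x₃ - x₂) * (x₁ - x₃) / (α * (x₂ - x₁) + β * (x₃ - x₂))) := by
    rw [hx₂']; exact a_sub_FQ1 α β x₂ x₃ x₁ hd₂
  have h7 : x₄' - x₃ = α * (x₄ - x₃) * (x₁ - x₃) / (α * (x₄ - x₃) + β * (x₁ - x₄)) := by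
    rw [hx₄']; exact FQ1_sub_b α β x₄ x₁ x₃ hd₄
  have h8 : x₁ - x₄' = -(β * (x₁ - x₄) * (x₃ - x₁) / (α * (x₄ - x₃) + β * (x₁ - x₄))) := by
    rw [hx₄']; exact a_sub_FQ1 α β x₄ x₁ x₃ hd₄
  -- second-stage differences
  have h1 : x₁' - x₂' = β * (x₂' - x₁) * (x₄' - x₂') / (α * (x₁ - x₄') + β * (x₂' - x₁)) := by
    rw [hx₁']; exact FQ1_sub_a α β x₁ x₂' x₄' hd₁
  have h2 : x₃' - x₄' = β * (x₄' - x₃) * (x₂' - x₄') / (α * (x₃ - x₂') + β * (x₄' - x₃)) := by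
    rw [hx₃']; exact FQ1_sub_a α β x₃ x₄' x₂' hd₃
  have h3 : x₂' - x₃' = -(α * (x₃ - x₂') * (x₄' - x₂') / (α * (x₃ - x₂') + β * (x₄' - x₃))) := by
    rw [hx₃']; exact b_sub_FQ1 α β x₃ x₄' x₂' hd₃
  have h4 : x₁' - x₄' = α * (x₁ - x₄') * (x₂' - x₄') / (α * (x₁ - x₄') + β * (x₂' - x₁)) := by
    rw [hx₁']; exact FQ1_sub_b α β x₁ x₂' x₄' hd₁
  -- nonzero facts from hcr'
  rw [h3, h4] at hcr'
  simp only [ne_eq, mul_ne_zero_iff, div_ne_zero_iff, neg_ne_zero] at hcr'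
  obtain ⟨⟨⟨⟨hα, h32⟩, h42⟩, -⟩, ⟨⟨-, h14'⟩, -⟩, -⟩ := hcr'
  have h32c := h32
  have hβ : β ≠ 0 := by
    rw [h6] at h32c
    simp only [ne_eq, neg_ne_zero, div_ne_zero_iff, mul_ne_zero_iff] at h32c
    exact h32c.1.1.1
  have h32d := h32
  have h13 : x₁ - x₃ ≠ 0 := by
    rw [h6] at h32d
    simp only [ne_eq, neg_ne_zero, div_ne_zero_iff, mul_ne_zero_iff] at h32d
    exact h32d.1.2
  -- put h2, h4 in `-(x₄' - x₂')` form
  have hne : x₂' - x₄' = -(x₄' - x₂') := by ring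
  rw [hne] at h2 h4
  -- stage 1: cancel all primed quantities
  rw [h1, h2, h3, h4,
    cancel1 α β (x₂' - x₁) (x₄' - x₃) (x₃ - x₂') (x₁ - x₄') (x₄' - x₂')
      (α * (x₁ - x₄') + β * (x₂' - x₁)) (α * (x₃ - x₂') + β * (x₄' - x₃))
      hd₁ hd₃ hα h32 h14' h42,
    h5, h6, h7, h8]
  exact cancel2 α β (α * (x₂ - x₁) + β * (x₃ - x₂)) (α * (x₄ - x₃) + β * (x₁ - x₄))
    x₁ x₂ x₃ x₄ hd₂ hd₄ hα hβ h13
end
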